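/- If S is a sum of roots of unity with integer coefficients (an element of the ring Z[ζ_n] expressed as S = Σ a_k ζ^k with ζ = e^{2πi/n}) and |S| = 1, then S is a root of unity. -/

import Mathlib

def IsRootOfUnity (z : ℂ) : Prop := ∃ n : ℕ, 0 < n ∧ z ^ n = 1

theorem stmt5 (n : ℕ) (hn : 0 < n) (a : ℕ → ℤ) (s : ℂ)
    (hs : s = ∑ k ∈ Finset.range n,
      (a k : ℂ) * Complex.exp (2 * Real.pi * Complex.I / n) ^ k)
    (habs : ‖s‖ = 1) : IsRootOfUnity s := by
  set μ : ℂ := Complex.exp (2 * Real.pi * Complex.I / n) with hμdef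
  have hprim : IsPrimitiveRoot μ n := Complex.isPrimitiveRoot_exp n hn.ne'
  have hμn : μ ^ n = 1 := hprim.pow_eq_one
  have hconj : ∀ w : ℂ, w ^ n = 1 → (starRingEnd ℂ) w = w ^ (n - 1) := by
    intro w hw
    have habsw : ‖w‖ = 1 := by
      have h1 : ‖w‖ ^ n = 1 := by rw [← norm_pow, hw, norm_one]
      have h2 := norm_nonneg w
      rcases (pow_eq_one_iff_cases.mp h1) with h | h | h
      · omega
      · exact h
      · exact absurd h.1 (by linarith)
    have hmul : w * (starRingEnd ℂ) w = 1 := by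
      rw [Complex.mul_conj, Complex.normSq_eq_norm_sq, habsw]; norm_num
    have hpow : w * w ^ (n - 1) = 1 := by
      rw [← pow_succ', Nat.sub_add_cancel hn, hw]
    calc (starRingEnd ℂ) w = (starRingEnd ℂ) w * (w * w ^ (n - 1)) := by
          rw [hpow, mul_one]
      _ = (w * (starRingEnd ℂ) w) * w ^ (n - 1) := by ring
      _ = w ^ (n - 1) := by rw [hmul, one_mul]
  have hμint : IsIntegral ℚ μ := by
    refine ⟨Polynomial.X ^ n - 1, ?_, ?_⟩
    · simpa using Polynomial.monic_X_pow_sub_C (1 : ℚ) hn.ne'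
    · simp [hμn]
  set K := IntermediateField.adjoin ℚ ({μ} : Set ℂ) with hK
  haveI : FiniteDimensional ℚ K := IntermediateField.adjoin.finiteDimensional hμint
  haveI : NumberField K := ⟨⟩
  have hμmem : μ ∈ K := IntermediateField.mem_adjoin_simple_self ℚ μ
  set μK : K := ⟨μ, hμmem⟩ with hμK
  have hμKn : μK ^ n = 1 := by
    apply Subtype.ext
    push_cast
    exact hμn
  set x : K := ∑ k ∈ Finset.range n, (a k : K) * μK ^ k with hx
  set t : K := ∑ k ∈ Finset.range n, (a k : K) * μK ^ (k * (n - 1)) with ht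
  have hxc : (x : ℂ) = s := by
    rw [hs]
    show K.val x = _
    rw [hx, map_sum]
    exact Finset.sum_congr rfl fun k _ => by rw [map_mul, map_pow, map_intCast]; rfl
  have htc : (t : ℂ) = (starRingEnd ℂ) s := by
    rw [hs]
    show K.val t = _
    rw [ht, map_sum, map_sum]
    refine Finset.sum_congr rfl fun k _ => ?_
    rw [map_mul, map_pow, map_intCast, map_mul, map_pow, hconj μ hμn, map_intCast,
      ← pow_mul, Nat.mul_comm]
    rfl
  have hxt : x * t = 1 := by
    have h : ((x * t : K) : ℂ) = ((1 : K) : ℂ) := by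
      push_cast
      rw [hxc, htc, Complex.mul_conj, Complex.normSq_eq_norm_sq, habs]
      norm_num
    exact_mod_cast Subtype.ext h
  have hμKint : IsIntegral ℤ μK := by
    refine ⟨Polynomial.X ^ n - 1, ?_, ?_⟩
    · simpa using Polynomial.monic_X_pow_sub_C (1 : ℤ) hn.ne'
    · simp [hμKn]
  have hxint : IsIntegral ℤ x := by
    apply IsIntegral.sum
    intro k hk
    exact (isIntegral_algebraMap (x := a k)).mul (hμKint.pow k)
  have hnorm : ∀ φ : K →+* ℂ, ‖φ x‖ = 1 := by
    intro φ
    set w : ℂ := φ μK with hw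
    have hwn : w ^ n = 1 := by rw [hw, ← map_pow, hμKn, map_one]
    have hφx : φ x = ∑ k ∈ Finset.range n, (a k : ℂ) * w ^ k := by
      rw [hx, map_sum]
      refine Finset.sum_congr rfl fun k hk => ?_
      rw [map_mul, map_pow, map_intCast]
    have hφt : φ t = (starRingEnd ℂ) (φ x) := by
      rw [ht, map_sum, hφx, map_sum]
      refine Finset.sum_congr rfl fun k hk => ?_
      rw [map_mul, map_pow, map_intCast, map_mul, map_pow, hconj w hwn, map_intCast,
        ← pow_mul, Nat.mul_comm]
    have h1 : φ x * (starRingEnd ℂ) (φ x) = 1 := by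
      rw [← hφt, ← map_mul, hxt, map_one]
    rw [Complex.mul_conj] at h1
    have h2 : Complex.normSq (φ x) = 1 := by exact_mod_cast h1
    rw [Complex.norm_def, h2, Real.sqrt_one]
  obtain ⟨m, hm, hxm⟩ := NumberField.Embeddings.pow_eq_one_of_norm_eq_one K ℂ hxint hnorm
  refine ⟨m, hm, ?_⟩
  have h := congrArg K.val hxm
  rw [map_pow, map_one] at h
  rw [show K.val x = (x : ℂ) from rfl, hxc] at h
  exact h
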